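/- arXiv:1904.06185 — 2 statements merged into one kernel-verified Lean document; each statement's English description precedes it below -/
import Mathlib

section
/- For probability densities p and q with respect to a dominating measure μ with 0 < q ≤ 1 μ-a.e., it holds that ∫ log((p + q)/(2q)) q dμ ≤ −∫ (√((p+q)/2) − √q)² dμ + (1/2)(∫ p dμ − 1). In particular, if p is also a probability density, then ∫ log((p+q)/(2q)) q dμ ≤ −∫ (√((p+q)/2) − √q)² dμ ≤ 0. -/
open MeasureTheory

/-- Hellinger-type inequality: for densities `p, q` w.r.t. `μ` with `0 < q ≤ 1` a.e.
and `∫ q = 1`, one has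
`∫ log((p+q)/(2q)) q dμ ≤ −∫ (√((p+q)/2) − √q)² dμ + (1/2)(∫ p dμ − 1)`;
if moreover `∫ p = 1`, then
`∫ log((p+q)/(2q)) q dμ ≤ −∫ (√((p+q)/2) − √q)² dμ ≤ 0`. -/
theorem hellinger_log_bound {α : Type*} [MeasurableSpace α] (μ : Measure α)
    (p q : α → ℝ) (hp : Measurable p) (hq : Measurable q)
    (hp0 : ∀ x, 0 ≤ p x) (hq01 : ∀ᵐ x ∂μ, 0 < q x ∧ q x ≤ 1)
    (hqint : ∫ x, q x ∂μ = 1) (hpint : Integrable p μ)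
    (hlogint : Integrable (fun x => Real.log ((p x + q x) / (2 * q x)) * q x) μ)
    (hsqint : Integrable
      (fun x => (Real.sqrt ((p x + q x) / 2) - Real.sqrt (q x)) ^ 2) μ) :
    (∫ x, Real.log ((p x + q x) / (2 * q x)) * q x ∂μ ≤
      -∫ x, (Real.sqrt ((p x + q x) / 2) - Real.sqrt (q x)) ^ 2 ∂μ +
        (1 / 2) * ((∫ x, p x ∂μ) - 1)) ∧
    ((∫ x, p x ∂μ) = 1 →
      (∫ x, Real.log ((p x + q x) / (2 * q x)) * q x ∂μ ≤
        -∫ x, (Real.sqrt ((p x + q x) / 2) - Real.sqrt (q x)) ^ 2 ∂μ) ∧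
      -∫ x, (Real.sqrt ((p x + q x) / 2) - Real.sqrt (q x)) ^ 2 ∂μ ≤ 0) := by
  have hqI : Integrable q μ := by
    by_contra h
    rw [integral_undef h] at hqint
    norm_num at hqint
  -- the dominating function
  set g : α → ℝ := fun x =>
    -(Real.sqrt ((p x + q x) / 2) - Real.sqrt (q x)) ^ 2 + (p x - q x) / 2 with hg
  have hgI : Integrable g μ := by
    apply Integrable.add hsqint.neg
    exact ((hpint.sub hqI).div_const 2)
  have hpt : ∀ᵐ x ∂μ, Real.log ((p x + q x) / (2 * q x)) * q x ≤ g x := by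
    filter_upwards [hq01] with x ⟨hq0, _⟩
    have hpq0 : 0 ≤ (p x + q x) / 2 := by
      have := hp0 x; linarith
    have hx0 : 0 < (p x + q x) / (2 * q x) := by
      have := hp0 x
      apply div_pos <;> linarith
    have hlog : Real.log ((p x + q x) / (2 * q x)) ≤
        2 * (Real.sqrt ((p x + q x) / (2 * q x)) - 1) := by
      have h1 : Real.log (Real.sqrt ((p x + q x) / (2 * q x))) ≤
          Real.sqrt ((p x + q x) / (2 * q x)) - 1 :=
        Real.log_le_sub_one_of_pos (Real.sqrt_pos.mpr hx0)
      have h2 := Real.log_sqrt hx0.le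
      linarith
    have hmul : Real.log ((p x + q x) / (2 * q x)) * q x ≤
        2 * (Real.sqrt ((p x + q x) / (2 * q x)) - 1) * q x :=
      mul_le_mul_of_nonneg_right hlog hq0.le
    refine hmul.trans_eq ?_
    have hsqrt : Real.sqrt ((p x + q x) / (2 * q x)) =
        Real.sqrt ((p x + q x) / 2) / Real.sqrt (q x) := by
      rw [← Real.sqrt_div hpq0]
      congr 1
      field_simp
      try ring
    have hsq : Real.sqrt (q x) ^ 2 = q x := Real.sq_sqrt hq0.le
    have hsq2 : Real.sqrt ((p x + q x) / 2) ^ 2 = (p x + q x) / 2 :=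
      Real.sq_sqrt hpq0
    have hqs : Real.sqrt (q x) > 0 := Real.sqrt_pos.mpr hq0
    simp only [hg]
    rw [hsqrt]
    set a := Real.sqrt ((p x + q x) / 2) with ha
    set b := Real.sqrt (q x) with hb
    have hbne : b ≠ 0 := hqs.ne'
    have hpx : p x = 2 * a ^ 2 - b ^ 2 := by linarith
    rw [show q x = b ^ 2 from hsq.symm, hpx]
    field_simp
    ring
  have hA : Integrable (fun x => -(Real.sqrt ((p x + q x) / 2) - Real.sqrt (q x)) ^ 2) μ :=
    hsqint.neg
  have hB : Integrable (fun x => (p x - q x) / 2) μ := (hpint.sub hqI).div_const 2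
  have hmain : ∫ x, Real.log ((p x + q x) / (2 * q x)) * q x ∂μ ≤ ∫ x, g x ∂μ :=
    integral_mono_ae hlogint hgI hpt
  have hgint : ∫ x, g x ∂μ =
      -∫ x, (Real.sqrt ((p x + q x) / 2) - Real.sqrt (q x)) ^ 2 ∂μ +
        (1 / 2) * ((∫ x, p x ∂μ) - 1) := by
    simp only [hg]
    rw [integral_add hA hB, integral_neg, integral_div, integral_sub hpint hqI, hqint]
    ring
  have h1 := hmain.trans_eq hgint
  refine ⟨h1, fun hp1 => ?_⟩
  have hnn : 0 ≤ ∫ x, (Real.sqrt ((p x + q x) / 2) - Real.sqrt (q x)) ^ 2 ∂μ :=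
    integral_nonneg fun x => sq_nonneg _
  constructor
  · rw [hp1] at h1
    simpa using h1
  · linarith
end

section
/- Let X be a random vector in ℝ^k with bounded support and E[X̄X̄'] positive definite, where X̄ = (1, X')'. Let Ψ be continuous and strictly increasing. If (θ_m) is a sequence in ℝ^{1+k} such that E[(Ψ(X̄'θ_m) − Ψ(X̄'θ₀))²] → 0 and (θ_m) is bounded, then θ_m → θ₀. -/
open MeasureTheory
open scoped RealInnerProductSpace

/-- Identification: if `X` has bounded support, `E[X̄X̄']` is positive definite
(i.e. `E[⟪X̄, v⟫²] > 0` for every `v ≠ 0`, where `X̄ = (1, X')'`), `Ψ` is continuous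
and strictly increasing, `(θ_m)` is bounded and `E[(Ψ(⟪X̄, θ_m⟫) − Ψ(⟪X̄, θ₀⟫))²] → 0`,
then `θ_m → θ₀`. -/
theorem identification_distribution_regression {k : ℕ}
    {Ω : Type*} [MeasurableSpace Ω] (μ : Measure Ω) [IsProbabilityMeasure μ]
    (X : Ω → EuclideanSpace ℝ (Fin k)) (hX : Measurable X)
    (hXbdd : ∃ M : ℝ, ∀ ω, ‖X ω‖ ≤ M)
    (Xbar : Ω → EuclideanSpace ℝ (Fin (k + 1)))
    (hXbar : ∀ ω, Xbar ω 0 = 1 ∧ ∀ j : Fin k, Xbar ω j.succ = X ω j)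
    (hposdef : ∀ v : EuclideanSpace ℝ (Fin (k + 1)), v ≠ 0 →
      0 < ∫ ω, ⟪Xbar ω, v⟫ ^ 2 ∂μ)
    (Ψ : ℝ → ℝ) (hΨcont : Continuous Ψ) (hΨmono : StrictMono Ψ)
    (θm : ℕ → EuclideanSpace ℝ (Fin (k + 1))) (θ₀ : EuclideanSpace ℝ (Fin (k + 1)))
    (hθbdd : ∃ B : ℝ, ∀ m, ‖θm m‖ ≤ B)
    (hcrit : Filter.Tendsto
      (fun m => ∫ ω, (Ψ ⟪Xbar ω, θm m⟫ - Ψ ⟪Xbar ω, θ₀⟫) ^ 2 ∂μ)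
      Filter.atTop (nhds 0)) :
    Filter.Tendsto θm Filter.atTop (nhds θ₀) := by
  classical
  obtain ⟨M₀, hM₀⟩ := hXbdd
  set M : ℝ := max M₀ 0 with hMdef
  have hM : ∀ ω, ‖X ω‖ ≤ M := fun ω => (hM₀ ω).trans (le_max_left _ _)
  have hM0 : (0:ℝ) ≤ M := le_max_right _ _
  set C : ℝ := Real.sqrt (1 + M ^ 2) with hCdef
  have hC0 : (0:ℝ) ≤ C := Real.sqrt_nonneg _
  -- the inner product with Xbar in coordinates
  have hinner_eq : ∀ (v : EuclideanSpace ℝ (Fin (k + 1))) (ω : Ω),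
      (⟪Xbar ω, v⟫ : ℝ) = v 0 + ∑ i : Fin k, X ω i * v i.succ := by
    intro v ω
    have h1 : (⟪Xbar ω, v⟫ : ℝ) = ∑ j : Fin (k + 1), Xbar ω j * v j := by
      simp [PiLp.inner_apply, RCLike.inner_apply, conj_trivial]
      exact Finset.sum_congr rfl fun _ _ => mul_comm _ _
    rw [h1, Fin.sum_univ_succ, (hXbar ω).1, one_mul]
    congr 1
    refine Finset.sum_congr rfl fun i _ => ?_
    rw [(hXbar ω).2 i]
  -- measurability of the inner products
  have hinner_meas : ∀ v : EuclideanSpace ℝ (Fin (k + 1)),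
      Measurable fun ω => (⟪Xbar ω, v⟫ : ℝ) := by
    intro v
    have : (fun ω => (⟪Xbar ω, v⟫ : ℝ))
        = fun ω => v 0 + ∑ i : Fin k, X ω i * v i.succ := by
      funext ω; exact hinner_eq v ω
    rw [this]
    refine Measurable.add measurable_const (Finset.measurable_sum _ fun i _ => ?_)
    exact (((EuclideanSpace.proj i).continuous.measurable).comp hX).mul measurable_const
  -- norm bound on Xbar
  have hXbar_norm : ∀ ω, ‖Xbar ω‖ ≤ C := by
    intro ω
    rw [EuclideanSpace.norm_eq]
    apply Real.sqrt_le_sqrt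
    have hsum : ∑ j : Fin (k + 1), ‖Xbar ω j‖ ^ 2 = 1 + ∑ i : Fin k, ‖X ω i‖ ^ 2 := by
      rw [Fin.sum_univ_succ, (hXbar ω).1]
      simp only [norm_one, one_pow]
      congr 1
      exact Finset.sum_congr rfl fun i _ => by rw [(hXbar ω).2 i]
    rw [hsum]
    have hXnorm : ∑ i : Fin k, ‖X ω i‖ ^ 2 = ‖X ω‖ ^ 2 := by
      rw [EuclideanSpace.norm_eq, Real.sq_sqrt]
      positivity
    rw [hXnorm]
    have : ‖X ω‖ ^ 2 ≤ M ^ 2 := by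
      apply pow_le_pow_left₀ (norm_nonneg _) (hM ω)
    linarith
  have hinner_bound : ∀ (v : EuclideanSpace ℝ (Fin (k + 1))) (ω : Ω),
      |(⟪Xbar ω, v⟫ : ℝ)| ≤ C * ‖v‖ := fun v ω =>
    (abs_real_inner_le_norm _ _).trans
      (mul_le_mul_of_nonneg_right (hXbar_norm ω) (norm_nonneg v))
  obtain ⟨B₀, hB₀⟩ := hθbdd
  set B : ℝ := max B₀ ‖θ₀‖ with hBdef
  have hB : ∀ m, ‖θm m‖ ≤ B := fun m => (hB₀ m).trans (le_max_left _ _)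
  have hBθ₀ : ‖θ₀‖ ≤ B := le_max_right _ _
  have hB0 : (0:ℝ) ≤ B := le_trans (norm_nonneg _) hBθ₀
  -- bound on Ψ on the relevant compact interval
  obtain ⟨K, hK⟩ := (isCompact_Icc (a := -(C * B)) (b := C * B)).exists_bound_of_continuousOn
    hΨcont.continuousOn
  have hΨbdd : ∀ (v : EuclideanSpace ℝ (Fin (k + 1))), ‖v‖ ≤ B → ∀ ω,
      |Ψ (⟪Xbar ω, v⟫ : ℝ)| ≤ K := by
    intro v hv ω
    have h1 : |(⟪Xbar ω, v⟫ : ℝ)| ≤ C * B :=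
      (hinner_bound v ω).trans (mul_le_mul_of_nonneg_left hv hC0)
    have h2 : (⟪Xbar ω, v⟫ : ℝ) ∈ Set.Icc (-(C * B)) (C * B) := by
      constructor <;> [linarith [neg_abs_le (⟪Xbar ω, v⟫ : ℝ)]; linarith [le_abs_self (⟪Xbar ω, v⟫ : ℝ)]]
    simpa using hK _ h2
  -- integrability of the squared difference for any pair of bounded parameters
  have hIntegrable : ∀ (u v : EuclideanSpace ℝ (Fin (k + 1))), ‖u‖ ≤ B → ‖v‖ ≤ B →
      Integrable (fun ω => (Ψ (⟪Xbar ω, u⟫ : ℝ) - Ψ (⟪Xbar ω, v⟫ : ℝ)) ^ 2) μ := by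
    intro u v hu hv
    have hmeas : Measurable fun ω => (Ψ (⟪Xbar ω, u⟫ : ℝ) - Ψ (⟪Xbar ω, v⟫ : ℝ)) ^ 2 :=
      (((hΨcont.measurable.comp (hinner_meas u)).sub
        (hΨcont.measurable.comp (hinner_meas v))).pow_const 2)
    refine (integrable_const ((2 * K) ^ 2)).mono' hmeas.aestronglyMeasurable
      (Filter.Eventually.of_forall fun ω => ?_)
    have h1 := hΨbdd u hu ω
    have h2 := hΨbdd v hv ω
    have habs : |Ψ (⟪Xbar ω, u⟫ : ℝ) - Ψ (⟪Xbar ω, v⟫ : ℝ)| ≤ 2 * K := by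
      calc |Ψ (⟪Xbar ω, u⟫ : ℝ) - Ψ (⟪Xbar ω, v⟫ : ℝ)|
          ≤ |Ψ (⟪Xbar ω, u⟫ : ℝ)| + |Ψ (⟪Xbar ω, v⟫ : ℝ)| := abs_sub _ _
        _ ≤ 2 * K := by linarith
    have hK0 : (0:ℝ) ≤ 2 * K := le_trans (abs_nonneg _) habs
    rw [Real.norm_eq_abs, abs_pow]
    calc |Ψ (⟪Xbar ω, u⟫ : ℝ) - Ψ (⟪Xbar ω, v⟫ : ℝ)| ^ 2 ≤ (2 * K) ^ 2 :=
        pow_le_pow_left₀ (abs_nonneg _) habs 2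
      _ = (2 * K) ^ 2 := rfl
  -- main subsequence argument
  apply Filter.tendsto_of_subseq_tendsto
  intro ns hns
  have hmem : ∀ n, θm (ns n) ∈ Metric.closedBall (0 : EuclideanSpace ℝ (Fin (k + 1))) B :=
    fun n => by simpa [Metric.mem_closedBall] using hB (ns n)
  obtain ⟨θs, hθs_mem, φ, hφ, hconv⟩ :=
    tendsto_subseq_of_bounded Metric.isBounded_closedBall hmem
  refine ⟨φ, ?_⟩
  have hθs_norm : ‖θs‖ ≤ B := by
    rw [Metric.isClosed_closedBall.closure_eq] at hθs_mem
    simpa [Metric.mem_closedBall] using hθs_mem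
  -- the composed sequence
  set σ : ℕ → ℕ := fun i => ns (φ i) with hσdef
  have hσ_tendsto : Filter.Tendsto σ Filter.atTop Filter.atTop :=
    hns.comp hφ.tendsto_atTop
  -- suffices to show θs = θ₀
  suffices hsθ : θs = θ₀ by
    have : Filter.Tendsto (fun i => θm (σ i)) Filter.atTop (nhds θ₀) := by
      rw [← hsθ]; exact hconv
    exact this
  -- criterion along subsequence tends to 0
  have hcrit' : Filter.Tendsto
      (fun i => ∫ ω, (Ψ (⟪Xbar ω, θm (σ i)⟫ : ℝ) - Ψ (⟪Xbar ω, θ₀⟫ : ℝ)) ^ 2 ∂μ)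
      Filter.atTop (nhds 0) := hcrit.comp hσ_tendsto
  -- criterion along subsequence tends to the limit criterion, by dominated convergence
  have hDCT : Filter.Tendsto
      (fun i => ∫ ω, (Ψ (⟪Xbar ω, θm (σ i)⟫ : ℝ) - Ψ (⟪Xbar ω, θ₀⟫ : ℝ)) ^ 2 ∂μ)
      Filter.atTop
      (nhds (∫ ω, (Ψ (⟪Xbar ω, θs⟫ : ℝ) - Ψ (⟪Xbar ω, θ₀⟫ : ℝ)) ^ 2 ∂μ)) := by
    apply tendsto_integral_of_dominated_convergence (fun _ => (2 * K) ^ 2)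
    · intro i
      exact ((((hΨcont.measurable.comp (hinner_meas (θm (σ i)))).sub
        (hΨcont.measurable.comp (hinner_meas θ₀))).pow_const 2)).aestronglyMeasurable
    · exact integrable_const _
    · intro i
      refine Filter.Eventually.of_forall fun ω => ?_
      have h1 := hΨbdd (θm (σ i)) (hB (σ i)) ω
      have h2 := hΨbdd θ₀ hBθ₀ ω
      have habs : |Ψ (⟪Xbar ω, θm (σ i)⟫ : ℝ) - Ψ (⟪Xbar ω, θ₀⟫ : ℝ)| ≤ 2 * K := by
        calc |Ψ (⟪Xbar ω, θm (σ i)⟫ : ℝ) - Ψ (⟪Xbar ω, θ₀⟫ : ℝ)|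
            ≤ |Ψ (⟪Xbar ω, θm (σ i)⟫ : ℝ)| + |Ψ (⟪Xbar ω, θ₀⟫ : ℝ)| := abs_sub _ _
          _ ≤ 2 * K := by linarith
      rw [Real.norm_eq_abs, abs_pow]
      exact pow_le_pow_left₀ (abs_nonneg _) habs 2
    · refine Filter.Eventually.of_forall fun ω => ?_
      have hconv' : Filter.Tendsto (fun i => θm (σ i)) Filter.atTop (nhds θs) := hconv
      have h1 : Filter.Tendsto (fun i => (⟪Xbar ω, θm (σ i)⟫ : ℝ)) Filter.atTop
          (nhds (⟪Xbar ω, θs⟫ : ℝ)) :=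
        Filter.Tendsto.inner tendsto_const_nhds hconv'
      have h2 := ((hΨcont.tendsto _).comp h1).sub
        (tendsto_const_nhds (x := Ψ (⟪Xbar ω, θ₀⟫ : ℝ)))
      exact h2.pow 2
  -- hence the limit criterion is 0
  have hzero : ∫ ω, (Ψ (⟪Xbar ω, θs⟫ : ℝ) - Ψ (⟪Xbar ω, θ₀⟫ : ℝ)) ^ 2 ∂μ = 0 :=
    tendsto_nhds_unique hDCT hcrit'
  -- so the integrand vanishes a.e.
  have hae : (fun ω => (Ψ (⟪Xbar ω, θs⟫ : ℝ) - Ψ (⟪Xbar ω, θ₀⟫ : ℝ)) ^ 2) =ᵐ[μ] 0 := by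
    rw [← integral_eq_zero_iff_of_nonneg_ae
      (Filter.Eventually.of_forall fun ω => sq_nonneg _)
      (hIntegrable θs θ₀ hθs_norm hBθ₀)]
    exact hzero
  -- therefore ⟪Xbar ω, θs - θ₀⟫ = 0 a.e.
  have hae2 : (fun ω => (⟪Xbar ω, θs - θ₀⟫ : ℝ) ^ 2) =ᵐ[μ] 0 := by
    filter_upwards [hae] with ω hω
    have h1 : Ψ (⟪Xbar ω, θs⟫ : ℝ) = Ψ (⟪Xbar ω, θ₀⟫ : ℝ) := by
      have := sq_eq_zero_iff.mp hω
      linarith [sub_eq_zero.mp this]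
    have h2 : (⟪Xbar ω, θs⟫ : ℝ) = (⟪Xbar ω, θ₀⟫ : ℝ) := hΨmono.injective h1
    simp [inner_sub_right, h2]
  by_contra hne
  have hvne : θs - θ₀ ≠ 0 := sub_ne_zero.mpr hne
  have := hposdef (θs - θ₀) hvne
  rw [integral_congr_ae hae2] at this
  simp only [Pi.zero_apply, integral_zero] at this
  exact lt_irrefl 0 this
end
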